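/- The real analytic germs f(x,y) = x² - y³ and g(x,y) = x² - y⁵ on ℝ² are topologically right equivalent at the origin, yet their Łojasiewicz gradient exponents differ: ℒ(f) = 2/3 and ℒ(g) = 4/5. Hence the Łojasiewicz gradient exponent of real analytic germs in two variables is not a topological invariant. -/

import Mathlib

noncomputable def LGE {𝕜 : Type*} [RCLike 𝕜] {E : Type*} [NormedAddCommGroup E]
    [NormedSpace 𝕜 E] (f : E → 𝕜) : ℝ :=
  sInf {l : ℝ | 0 < l ∧ ∃ c > (0:ℝ), ∃ ε > (0:ℝ), ∀ z : E, ‖z‖ < ε →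
    c * ‖f z‖ ^ l ≤ ‖fderiv 𝕜 f z‖}

open Real NNReal

noncomputable def phi (y : ℝ) : ℝ := Real.sign y * |y| ^ ((3:ℝ)/5)

lemma phi_zero : phi 0 = 0 := by simp [phi]

lemma phi_of_pos {y : ℝ} (hy : 0 < y) : phi y = y ^ ((3:ℝ)/5) := by
  rw [phi, Real.sign_of_pos hy, abs_of_pos hy, one_mul]

lemma phi_neg (y : ℝ) : phi (-y) = - phi y := by
  rw [phi, phi, Real.sign_neg, abs_neg, neg_mul]

lemma phi_pos {y : ℝ} (hy : 0 < y) : 0 < phi y := by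
  rw [phi_of_pos hy]; exact Real.rpow_pos_of_pos hy _

lemma phi_neg_of_neg {y : ℝ} (hy : y < 0) : phi y < 0 := by
  have := phi_pos (show 0 < -y by linarith)
  rw [phi_neg] at this; linarith

lemma phi_nonneg {y : ℝ} (hy : 0 ≤ y) : 0 ≤ phi y := by
  rcases eq_or_lt_of_le hy with h | h
  · rw [← h, phi_zero]
  · exact le_of_lt (phi_pos h)

lemma phi_mono : StrictMono phi := by
  intro u v huv
  rcases le_or_gt 0 u with hu | hu
  · have hv : 0 < v := lt_of_le_of_lt hu huv
    rcases eq_or_lt_of_le hu with hu0 | hu0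
    · rw [← hu0, phi_zero]; exact phi_pos hv
    · rw [phi_of_pos hu0, phi_of_pos hv]
      exact Real.rpow_lt_rpow (le_of_lt hu0) huv (by norm_num)
  · rcases le_or_gt 0 v with hv | hv
    · exact lt_of_lt_of_le (phi_neg_of_neg hu) (phi_nonneg hv)
    · have h2 : phi (-v) < phi (-u) := by
        rw [phi_of_pos (show 0 < -v by linarith), phi_of_pos (show 0 < -u by linarith)]
        exact Real.rpow_lt_rpow (by linarith) (by linarith) (by norm_num)
      rw [phi_neg, phi_neg] at h2; linarith

lemma phi_apply_rpow {t : ℝ} (ht : 0 < t) : phi (t ^ ((5:ℝ)/3)) = t := by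
  have h : 0 < t ^ ((5:ℝ)/3) := Real.rpow_pos_of_pos ht _
  rw [phi_of_pos h, ← Real.rpow_mul (le_of_lt ht)]
  norm_num

lemma phi_surj : Function.Surjective phi := by
  intro t
  rcases lt_trichotomy t 0 with ht | ht | ht
  · exact ⟨-((-t) ^ ((5:ℝ)/3)), by rw [phi_neg, phi_apply_rpow (by linarith)]; ring⟩
  · exact ⟨0, by rw [phi_zero, ht]⟩
  · exact ⟨t ^ ((5:ℝ)/3), phi_apply_rpow ht⟩

lemma phi_pow_five {y : ℝ} : (phi y) ^ 5 = y ^ 3 := by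
  rcases lt_trichotomy y 0 with hy | hy | hy
  · have h2 : phi (-y) ^ 5 = (-y) ^ 3 := by
      rw [phi_of_pos (show 0 < -y by linarith), ← Real.rpow_natCast ((-y) ^ ((3:ℝ)/5)) 5,
        ← Real.rpow_mul (by linarith)]
      norm_num
    rw [phi_neg y] at h2
    nlinarith [h2]
  · rw [hy, phi_zero]; norm_num
  · rw [phi_of_pos hy, ← Real.rpow_natCast (y ^ ((3:ℝ)/5)) 5, ← Real.rpow_mul (le_of_lt hy)]
    norm_num

noncomputable def phiHomeo : ℝ ≃ₜ ℝ :=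
  (StrictMono.orderIsoOfSurjective phi phi_mono phi_surj).toHomeomorph

lemma phiHomeo_apply (y : ℝ) : phiHomeo y = phi y := rfl

noncomputable def bigH : (ℝ × ℝ) ≃ₜ (ℝ × ℝ) := (Homeomorph.refl ℝ).prodCongr phiHomeo

lemma bigH_works : bigH 0 = 0 ∧
    ∀ p : ℝ × ℝ, p.1 ^ 2 - p.2 ^ 3 = (bigH p).1 ^ 2 - (bigH p).2 ^ 5 := by
  constructor
  · show ((0:ℝ), phiHomeo 0) = 0
    rw [phiHomeo_apply, phi_zero]; rfl
  · intro p
    show p.1 ^ 2 - p.2 ^ 3 = p.1 ^ 2 - (phiHomeo p.2) ^ 5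
    rw [phiHomeo_apply, phi_pow_five]

lemma myRpowAddLe (a b p : ℝ) (ha : 0 ≤ a) (hb : 0 ≤ b) (hp : 0 ≤ p) (hp1 : p ≤ 1) :
    (a + b) ^ p ≤ a ^ p + b ^ p := by
  have h := NNReal.coe_le_coe.2 (NNReal.rpow_add_le_add_rpow (⟨a, ha⟩ : ℝ≥0) ⟨b, hb⟩ hp hp1)
  push_cast at h
  exact h

lemma lge_eq (n : ℕ) (hn : 2 ≤ n) :
    LGE (fun p : ℝ × ℝ => p.1 ^ 2 - p.2 ^ n) = ((n : ℝ) - 1) / n := by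
  have hn2 : (2:ℝ) ≤ (n:ℝ) := by exact_mod_cast hn
  have hnpos : (0:ℝ) < n := by linarith
  set l : ℝ := ((n : ℝ) - 1) / n with hl
  have hl0 : 0 < l := div_pos (by linarith) hnpos
  have hl1 : l ≤ 1 := by rw [hl, div_le_one hnpos]; linarith
  have hnl : (n:ℝ) * l = (n:ℝ) - 1 := by rw [hl]; field_simp
  have h2l : 1 ≤ 2 * l := by
    rw [hl, ← mul_div_assoc, le_div_iff₀ hnpos]; linarith
  -- derivative
  have hdf : ∀ z : ℝ × ℝ, HasFDerivAt (fun p : ℝ × ℝ => p.1 ^ 2 - p.2 ^ n)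
      ((((2:ℕ):ℝ) * z.1 ^ (2-1)) • (ContinuousLinearMap.fst ℝ ℝ ℝ)
        - (((n:ℕ):ℝ) * z.2 ^ (n-1)) • (ContinuousLinearMap.snd ℝ ℝ ℝ)) z :=
    fun z => (((hasDerivAt_pow 2 z.1).comp_hasFDerivAt z hasFDerivAt_fst).sub
      ((hasDerivAt_pow n z.2).comp_hasFDerivAt z hasFDerivAt_snd))
  have hfd : ∀ z : ℝ × ℝ, fderiv ℝ (fun p : ℝ × ℝ => p.1 ^ 2 - p.2 ^ n) z
      = (((2:ℕ):ℝ) * z.1 ^ (2-1)) • (ContinuousLinearMap.fst ℝ ℝ ℝ)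
        - (((n:ℕ):ℝ) * z.2 ^ (n-1)) • (ContinuousLinearMap.snd ℝ ℝ ℝ) :=
    fun z => (hdf z).fderiv
  -- evaluation lemmas
  have heval1 : ∀ z : ℝ × ℝ,
      (fderiv ℝ (fun p : ℝ × ℝ => p.1 ^ 2 - p.2 ^ n) z) ((1:ℝ), (0:ℝ)) = 2 * z.1 := by
    intro z; rw [hfd z]; simp
  have heval2 : ∀ z : ℝ × ℝ,
      (fderiv ℝ (fun p : ℝ × ℝ => p.1 ^ 2 - p.2 ^ n) z) ((0:ℝ), (1:ℝ)) = -((n:ℝ) * z.2 ^ (n-1)) := by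
    intro z; rw [hfd z]; simp
  have hnorm10 : ‖((1:ℝ), (0:ℝ))‖ = 1 := by
    rw [Prod.norm_def]; simp
  have hnorm01 : ‖((0:ℝ), (1:ℝ))‖ = 1 := by
    rw [Prod.norm_def]; simp
  -- lower bounds on the operator norm
  have hD1 : ∀ z : ℝ × ℝ, 2 * |z.1| ≤ ‖fderiv ℝ (fun p : ℝ × ℝ => p.1 ^ 2 - p.2 ^ n) z‖ := by
    intro z
    have h := (fderiv ℝ (fun p : ℝ × ℝ => p.1 ^ 2 - p.2 ^ n) z).le_opNorm ((1:ℝ), (0:ℝ))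
    rw [heval1 z, hnorm10, mul_one, Real.norm_eq_abs, abs_mul] at h
    simpa using h
  have hD2 : ∀ z : ℝ × ℝ, (n:ℝ) * |z.2| ^ (n-1)
      ≤ ‖fderiv ℝ (fun p : ℝ × ℝ => p.1 ^ 2 - p.2 ^ n) z‖ := by
    intro z
    have h := (fderiv ℝ (fun p : ℝ × ℝ => p.1 ^ 2 - p.2 ^ n) z).le_opNorm ((0:ℝ), (1:ℝ))
    rw [heval2 z, hnorm01, mul_one, Real.norm_eq_abs, abs_neg, abs_mul, abs_pow] at h
    simpa [abs_of_nonneg hnpos.le] using h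
  -- membership of l
  have hmem : l ∈ {l : ℝ | 0 < l ∧ ∃ c > (0:ℝ), ∃ ε > (0:ℝ), ∀ z : ℝ × ℝ, ‖z‖ < ε →
      c * ‖(fun p : ℝ × ℝ => p.1 ^ 2 - p.2 ^ n) z‖ ^ l
        ≤ ‖fderiv ℝ (fun p : ℝ × ℝ => p.1 ^ 2 - p.2 ^ n) z‖} := by
    refine ⟨hl0, 1, one_pos, 1, one_pos, ?_⟩
    intro z hz
    obtain ⟨x, y⟩ := z
    simp only [one_mul]
    have hx1 : |x| < 1 := by
      have := norm_fst_le ((x, y) : ℝ × ℝ)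
      simp only [Real.norm_eq_abs] at this
      linarith
    have h1 : ‖x ^ 2 - y ^ n‖ ≤ x ^ 2 + |y| ^ n := by
      rw [Real.norm_eq_abs]
      calc |x ^ 2 - y ^ n| ≤ |x ^ 2| + |y ^ n| := abs_sub _ _
        _ = x ^ 2 + |y| ^ n := by rw [abs_pow, abs_pow, sq_abs]
    have h2 : ‖x ^ 2 - y ^ n‖ ^ l ≤ (x ^ 2 + |y| ^ n) ^ l :=
      Real.rpow_le_rpow (norm_nonneg _) h1 hl0.le
    have h3 : (x ^ 2 + |y| ^ n) ^ l ≤ (x ^ 2) ^ l + (|y| ^ n) ^ l :=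
      myRpowAddLe _ _ _ (sq_nonneg x) (pow_nonneg (abs_nonneg y) n) hl0.le hl1
    have h4 : (x ^ 2) ^ l ≤ |x| := by
      rcases eq_or_lt_of_le (abs_nonneg x) with hx0 | hx0
      · rw [← sq_abs, ← hx0]
        rw [show ((0:ℝ) ^ 2 : ℝ) = 0 by norm_num, Real.zero_rpow (ne_of_gt hl0)]
      · have : (x ^ 2 : ℝ) ^ l = |x| ^ (2 * l) := by
          rw [← sq_abs, ← Real.rpow_natCast |x| 2, ← Real.rpow_mul (abs_nonneg x)]
          norm_num
        rw [this]
        calc |x| ^ (2*l) ≤ |x| ^ (1:ℝ) :=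
              Real.rpow_le_rpow_of_exponent_ge hx0 hx1.le h2l
          _ = |x| := Real.rpow_one _
    have h5 : (|y| ^ n) ^ l = |y| ^ (n - 1) := by
      rw [← Real.rpow_natCast |y| n, ← Real.rpow_mul (abs_nonneg y), hnl,
        show ((n:ℝ) - 1) = ((n - 1 : ℕ) : ℝ) by
          rw [Nat.cast_sub (by omega)]; norm_num,
        Real.rpow_natCast]
    have hd1 := hD1 (x, y)
    have hd2 := hD2 (x, y)
    have hyn : (0:ℝ) ≤ |y| ^ (n-1) := pow_nonneg (abs_nonneg y) _
    have h2y : 2 * (|y| ^ (n-1)) ≤ (n:ℝ) * |y| ^ (n-1) :=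
      mul_le_mul_of_nonneg_right hn2 hyn
    calc ‖x ^ 2 - y ^ n‖ ^ l ≤ (x ^ 2) ^ l + (|y| ^ n) ^ l := le_trans h2 h3
      _ ≤ |x| + |y| ^ (n-1) := by rw [h5]; linarith
      _ ≤ ‖fderiv ℝ (fun p : ℝ × ℝ => p.1 ^ 2 - p.2 ^ n) (x, y)‖ := by
          dsimp only at hd1 hd2; linarith
  -- any exponent in the set is ≥ l
  have hlb : ∀ L ∈ {l : ℝ | 0 < l ∧ ∃ c > (0:ℝ), ∃ ε > (0:ℝ), ∀ z : ℝ × ℝ, ‖z‖ < ε →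
      c * ‖(fun p : ℝ × ℝ => p.1 ^ 2 - p.2 ^ n) z‖ ^ l
        ≤ ‖fderiv ℝ (fun p : ℝ × ℝ => p.1 ^ 2 - p.2 ^ n) z‖}, l ≤ L := by
    rintro L ⟨hL0, c, hc, ε, hε, hineq⟩
    by_contra hcon
    push_neg at hcon
    have hδ : 0 < (n:ℝ) - 1 - (n:ℝ) * L := by
      have : (n:ℝ) * L < (n:ℝ) * l := by
        exact mul_lt_mul_of_pos_left hcon hnpos
      rw [hnl] at this; linarith
    set δ : ℝ := (n:ℝ) - 1 - (n:ℝ) * L with hδdef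
    have hcn : 0 < c / n := div_pos hc hnpos
    set B : ℝ := (c / n) ^ δ⁻¹ with hB
    have hBpos : 0 < B := Real.rpow_pos_of_pos hcn _
    set y : ℝ := min (ε/2) (B/2) with hy
    have hy0 : 0 < y := lt_min (by linarith) (by linarith)
    have hyε : ‖((0:ℝ), y)‖ < ε := by
      rw [Prod.norm_def]
      simp only [norm_zero, Real.norm_eq_abs, abs_of_pos hy0]
      have : y ≤ ε/2 := min_le_left _ _
      have h0 : max (0:ℝ) y = y := max_eq_right hy0.le
      rw [h0]; linarith
    have hfval : ‖(fun p : ℝ × ℝ => p.1 ^ 2 - p.2 ^ n) ((0:ℝ), y)‖ = y ^ n := by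
      simp only
      rw [Real.norm_eq_abs]
      rw [show (0:ℝ) ^ 2 - y ^ n = -(y ^ n) by ring, abs_neg, abs_of_pos (pow_pos hy0 n)]
    have hDle : ‖fderiv ℝ (fun p : ℝ × ℝ => p.1 ^ 2 - p.2 ^ n) ((0:ℝ), y)‖
        ≤ (n:ℝ) * y ^ (n-1) := by
      rw [hfd]
      refine ContinuousLinearMap.opNorm_le_bound _
        (by positivity) ?_
      intro u
      simp only [ContinuousLinearMap.coe_sub', Pi.sub_apply,
        ContinuousLinearMap.smul_apply, ContinuousLinearMap.coe_fst',
        ContinuousLinearMap.coe_snd', smul_eq_mul]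
      rw [show ((2:ℕ):ℝ) * (0:ℝ) ^ (2-1) * u.1 - ((n:ℕ):ℝ) * y ^ (n-1) * u.2
          = -(((n:ℕ):ℝ) * y ^ (n-1) * u.2) by norm_num]
      rw [Real.norm_eq_abs, abs_neg, abs_mul, abs_mul, Nat.abs_cast,
        abs_of_pos (pow_pos hy0 (n-1))]
      refine mul_le_mul_of_nonneg_left ?_ (by positivity)
      exact le_trans (le_of_eq (Real.norm_eq_abs u.2).symm) (norm_snd_le u)
    have hkey := hineq ((0:ℝ), y) hyε
    rw [hfval] at hkey
    have hpowL : (y ^ n : ℝ) ^ L = y ^ ((n:ℝ) * L) := by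
      rw [← Real.rpow_natCast y n, ← Real.rpow_mul hy0.le]
    have hyn1 : (y : ℝ) ^ (n - 1) = y ^ ((n:ℝ) * L) * y ^ δ := by
      rw [← Real.rpow_add hy0 ((n:ℝ) * L) δ]
      rw [hδdef]
      rw [show (n:ℝ) * L + ((n:ℝ) - 1 - (n:ℝ) * L) = (n:ℝ) - 1 by ring]
      rw [show ((n:ℝ) - 1) = ((n - 1 : ℕ) : ℝ) by
          rw [Nat.cast_sub (by omega)]; norm_num,
        Real.rpow_natCast]
    have hchain : c * y ^ ((n:ℝ) * L) ≤ (n:ℝ) * (y ^ ((n:ℝ) * L) * y ^ δ) := by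
      calc c * y ^ ((n:ℝ) * L) = c * (y ^ n : ℝ) ^ L := by rw [hpowL]
        _ ≤ ‖fderiv ℝ (fun p : ℝ × ℝ => p.1 ^ 2 - p.2 ^ n) ((0:ℝ), y)‖ := hkey
        _ ≤ (n:ℝ) * y ^ (n-1) := hDle
        _ = (n:ℝ) * (y ^ ((n:ℝ) * L) * y ^ δ) := by rw [hyn1]
    have hypos : 0 < y ^ ((n:ℝ) * L) := Real.rpow_pos_of_pos hy0 _
    have hc' : c ≤ (n:ℝ) * y ^ δ :=
      le_of_mul_le_mul_right (by linarith [hchain]) hypos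
    have hyB : y < B := lt_of_le_of_lt (min_le_right _ _) (by linarith)
    have hyδ : y ^ δ < c / n := by
      calc y ^ δ < B ^ δ := Real.rpow_lt_rpow hy0.le hyB hδ
        _ = c / n := by
          rw [hB, ← Real.rpow_mul hcn.le, inv_mul_cancel₀ (ne_of_gt hδ), Real.rpow_one]
    have : (n:ℝ) * y ^ δ < c := by
      calc (n:ℝ) * y ^ δ < (n:ℝ) * (c / n) := mul_lt_mul_of_pos_left hyδ hnpos
        _ = c := by field_simp
    linarith
  -- conclude
  rw [LGE]
  refine le_antisymm (csInf_le ⟨0, fun x hx => hx.1.le⟩ hmem) (le_csInf ⟨l, hmem⟩ hlb)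

/-- `f(x,y) = x² - y³` and `g(x,y) = x² - y⁵` are topologically right
equivalent at `0` (indeed by a global homeomorphism fixing `0`), yet
`ℒ(f) = 2/3 ≠ 4/5 = ℒ(g)`; so the Łojasiewicz gradient exponent of real analytic germs in
two variables is not a topological invariant. -/
theorem stmt16 :
    (∃ h : (ℝ × ℝ) ≃ₜ (ℝ × ℝ), h 0 = 0 ∧
      ∀ p : ℝ × ℝ, p.1 ^ 2 - p.2 ^ 3 = (h p).1 ^ 2 - (h p).2 ^ 5) ∧
    LGE (fun p : ℝ × ℝ => p.1 ^ 2 - p.2 ^ 3) = 2 / 3 ∧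
    LGE (fun p : ℝ × ℝ => p.1 ^ 2 - p.2 ^ 5) = 4 / 5 ∧
    ((2 : ℝ) / 3 ≠ 4 / 5) := by
  refine ⟨⟨bigH, bigH_works.1, bigH_works.2⟩, ?_, ?_, by norm_num⟩
  · have h := lge_eq 3 (by norm_num)
    norm_num at h
    convert h using 2
  · have h := lge_eq 5 (by norm_num)
    norm_num at h
    convert h using 2
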